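/- arXiv:2104.14750 — 7 statements merged into one kernel-verified Lean document; each statement's English description precedes it below -/
import Mathlib

section
/- Let h : ℝⁿ → (-∞,∞] be σ-strongly convex, ε ≥ 0, and t ∈ (0,1]. Then for any x, z ∈ dom h and any y in the ε-subdifferential of h at x, one has h(z) ≥ h(x) + ⟨y, z - x⟩ + (σ(1-t)/2)‖z - x‖² - ε/t. -/
open RealInnerProductSpace

/-- Lemma 2.1: σ-strong convexity plus ε-subgradient inequality gives the refined bound. -/
theorem eps_subgradient_strong_convex {n : ℕ} (h : EuclideanSpace ℝ (Fin n) → ℝ)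
    (σ ε t : ℝ) (hσ : 0 ≤ σ) (hε : 0 ≤ ε) (ht : t ∈ Set.Ioc (0 : ℝ) 1)
    (hsc : ∀ x z : EuclideanSpace ℝ (Fin n), ∀ l ∈ Set.Icc (0 : ℝ) 1,
      h (l • x + (1 - l) • z) ≤ l * h x + (1 - l) * h z - σ / 2 * (l * (1 - l)) * ‖x - z‖ ^ 2)
    (x z y : EuclideanSpace ℝ (Fin n))
    (hy : ∀ w, h x + ⟪y, w - x⟫ - ε ≤ h w) :
    h x + ⟪y, z - x⟫ + σ * (1 - t) / 2 * ‖z - x‖ ^ 2 - ε / t ≤ h z := by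
  obtain ⟨ht0, ht1⟩ := ht
  have h1 := hsc x z (1 - t) ⟨by linarith, by linarith⟩
  have h2 := hy ((1 - t) • x + t • z)
  have hw : ((1 - t) • x + t • z) - x = t • (z - x) := by
    simp [smul_sub, sub_smul, one_smul]; abel
  rw [hw, real_inner_smul_right] at h2
  have hnorm : ‖x - z‖ = ‖z - x‖ := norm_sub_rev _ _
  have hts : (1 : ℝ) - (1 - t) = t := by ring
  rw [hts, hnorm] at h1
  have hε' : ε / t * t = ε := div_mul_cancel₀ _ (ne_of_gt ht0)
  nlinarith [h1, h2, hε', sq_nonneg (‖z - x‖), mul_pos ht0 ht0]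
end

section
/- Let f = f₁ - f₂ where f₁ is σ₁-strongly convex and f₂ is σ₂-strongly convex with σ₁ + σ₂ > 0. Let γ ∈ [0, (σ₁+σ₂)/2) and suppose the sequences {xᵏ}, {yᵏ} satisfy yᵏ ∈ ∂f₂(xᵏ) and yᵏ + γ(xᵏ - xᵏ⁻¹) ∈ ∂f₁(xᵏ⁺¹). Then f(xᵏ) ≥ f(xᵏ⁺¹) + γ⟨xᵏ - xᵏ⁻¹, xᵏ - xᵏ⁺¹⟩ + ((σ₁+σ₂)/2)‖xᵏ⁺¹ - xᵏ‖². -/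
open RealInnerProductSpace

/-- The convex subdifferential of an ℝ-valued function. -/
def subdiff {n : ℕ} (f : EuclideanSpace ℝ (Fin n) → ℝ) (x : EuclideanSpace ℝ (Fin n)) :
    Set (EuclideanSpace ℝ (Fin n)) :=
  {y | ∀ z, f x + ⟪y, z - x⟫ ≤ f z}

/-- σ-strong convexity: f - (σ/2)‖·‖² is convex. -/
def StrongConvex {n : ℕ} (σ : ℝ) (f : EuclideanSpace ℝ (Fin n) → ℝ) : Prop :=
  ConvexOn ℝ Set.univ (fun x => f x - σ / 2 * ‖x‖ ^ 2)

lemma strong_subgrad {n : ℕ} (f : EuclideanSpace ℝ (Fin n) → ℝ) (σ : ℝ) (hσ : 0 ≤ σ)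
    (hf : StrongConvex σ f) (x v z : EuclideanSpace ℝ (Fin n)) (hv : v ∈ subdiff f x) :
    f x + ⟪v, z - x⟫ + σ / 2 * ‖z - x‖ ^ 2 ≤ f z := by
  set d := z - x with hd
  have key : ∀ t : ℝ, 0 < t → t ≤ 1 →
      f x + ⟪v, d⟫ + σ / 2 * ‖d‖ ^ 2 ≤ f z + σ * t / 2 * ‖d‖ ^ 2 := by
    intro t ht ht1
    have hxz : (1 - t) • x + t • z = x + t • d := by
      rw [hd]; module
    have hconv := hf.2 (Set.mem_univ x) (Set.mem_univ z)
      (show (0:ℝ) ≤ 1 - t by linarith) ht.le (by ring)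
    rw [hxz] at hconv
    simp only [smul_eq_mul] at hconv
    have hsub := hv (x + t • d)
    have hpx : (x + t • d) - x = t • d := by abel
    rw [hpx, real_inner_smul_right] at hsub
    have hnorm : ‖x + t • d‖ ^ 2 = ‖x‖ ^ 2 + 2 * (t * ⟪x, d⟫) + t ^ 2 * ‖d‖ ^ 2 := by
      rw [@norm_add_sq_real, real_inner_smul_right, norm_smul]
      rw [Real.norm_eq_abs, abs_of_pos ht]
      ring
    have hzx : ‖z‖ ^ 2 = ‖x‖ ^ 2 + 2 * ⟪x, d⟫ + ‖d‖ ^ 2 := by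
      have : z = x + d := by rw [hd]; abel
      rw [this, @norm_add_sq_real]
    rw [hnorm, hzx] at hconv
    nlinarith [sq_nonneg ‖d‖, sq_nonneg t, mul_pos ht ht]
  have : ∀ ε : ℝ, 0 < ε → f x + ⟪v, d⟫ + σ / 2 * ‖d‖ ^ 2 ≤ f z + ε := by
    intro ε hε
    rcases le_or_gt (σ * ‖d‖ ^ 2) 0 with h | h
    · have := key 1 one_pos le_rfl
      nlinarith
    · set t := min 1 (ε / (σ * ‖d‖ ^ 2)) with htdef
      have ht0 : 0 < t := lt_min one_pos (div_pos hε h)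
      have ht1 : t ≤ 1 := min_le_left _ _
      have := key t ht0 ht1
      have htle : t ≤ ε / (σ * ‖d‖ ^ 2) := min_le_right _ _
      have : σ * t / 2 * ‖d‖ ^ 2 ≤ ε / 2 := by
        have := mul_le_mul_of_nonneg_left htle (le_of_lt h)
        rw [mul_div_cancel₀ _ (ne_of_gt h)] at this
        nlinarith
      linarith [key t ht0 ht1]
  linarith [le_of_forall_pos_le_add this]

/-- One-step key inequality (3.8) for the exact refined inertial DCA. -/
theorem RInDCAe_key_inequality {n : ℕ}
    (f₁ f₂ : EuclideanSpace ℝ (Fin n) → ℝ) (σ₁ σ₂ γ : ℝ)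
    (hσ₁ : 0 ≤ σ₁) (hσ₂ : 0 ≤ σ₂) (hpos : 0 < σ₁ + σ₂)
    (hγ : γ ∈ Set.Ico (0 : ℝ) ((σ₁ + σ₂) / 2))
    (hf₁ : StrongConvex σ₁ f₁) (hf₂ : StrongConvex σ₂ f₂)
    (xkm1 xk xkp1 yk : EuclideanSpace ℝ (Fin n))
    (hyk : yk ∈ subdiff f₂ xk)
    (hstep : yk + γ • (xk - xkm1) ∈ subdiff f₁ xkp1) :
    f₁ xk - f₂ xk ≥ (f₁ xkp1 - f₂ xkp1) + γ * ⟪xk - xkm1, xk - xkp1⟫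
      + (σ₁ + σ₂) / 2 * ‖xkp1 - xk‖ ^ 2 := by
  have h1 := strong_subgrad f₂ σ₂ hσ₂ hf₂ xk yk xkp1 hyk
  have h2 := strong_subgrad f₁ σ₁ hσ₁ hf₁ xkp1 (yk + γ • (xk - xkm1)) xk hstep
  rw [inner_add_left, real_inner_smul_left] at h2
  have hrev : ‖xk - xkp1‖ = ‖xkp1 - xk‖ := norm_sub_rev _ _
  have hinn : ⟪yk, xk - xkp1⟫ = -⟪yk, xkp1 - xk⟫ := by
    rw [← inner_neg_right]; congr 1; abel
  rw [hrev, hinn] at h2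
  linarith
end

section
/- Under the same assumptions as the previous statement (exact refined inertial DCA iteration with σ₁ + σ₂ > 0 and γ ∈ [0,(σ₁+σ₂)/2)), for all k ≥ 0: f(xᵏ⁺¹) + ((σ₁+σ₂-γ)/2)‖xᵏ⁺¹ - xᵏ‖² ≤ f(xᵏ) + ((σ₁+σ₂-γ)/2)‖xᵏ - xᵏ⁻¹‖² - ((σ₁+σ₂-2γ)/2)‖xᵏ - xᵏ⁻¹‖². In particular, the sequence k ↦ f(xᵏ) + ((σ₁+σ₂-γ)/2)‖xᵏ - xᵏ⁻¹‖² is nonincreasing. -/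
open RealInnerProductSpace

lemma strong_subdiff {n : ℕ} {f : EuclideanSpace ℝ (Fin n) → ℝ} {σ : ℝ}
    (hf : StrongConvex σ f) {x y : EuclideanSpace ℝ (Fin n)} (hy : y ∈ subdiff f x)
    (z : EuclideanSpace ℝ (Fin n)) :
    f x + ⟪y, z - x⟫ + σ / 2 * ‖z - x‖ ^ 2 ≤ f z := by
  have key : ∀ t : ℝ, 0 < t → t ≤ 1 →
      ⟪y, z - x⟫ + σ / 2 * ‖z - x‖ ^ 2 ≤ f z - f x + σ / 2 * ‖z - x‖ ^ 2 * t := by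
    intro t ht ht1
    have hconv := hf.2 (Set.mem_univ x) (Set.mem_univ z)
      (by linarith : (0:ℝ) ≤ 1 - t) ht.le (by ring)
    have hsub := hy ((1 - t) • x + t • z)
    have hz' : (1 - t) • x + t • z - x = t • (z - x) := by module
    rw [hz', real_inner_smul_right] at hsub
    have hnorm : ‖(1 - t) • x + t • z‖ ^ 2
        = (1 - t) ^ 2 * ‖x‖ ^ 2 + 2 * ((1 - t) * (t * ⟪x, z⟫)) + t ^ 2 * ‖z‖ ^ 2 := by
      rw [norm_add_sq_real, norm_smul, norm_smul, real_inner_smul_left, real_inner_smul_right,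
        Real.norm_eq_abs, Real.norm_eq_abs, abs_of_nonneg (by linarith), abs_of_nonneg ht.le]
      ring
    have hzx : ‖z - x‖ ^ 2 = ‖z‖ ^ 2 - 2 * ⟪z, x⟫ + ‖x‖ ^ 2 := by
      rw [norm_sub_sq_real]
    have hsymm : ⟪x, z⟫ = ⟪z, x⟫ := (real_inner_comm z x)
    simp only [smul_eq_mul] at hconv
    rw [hnorm] at hconv
    have hid : (1 - t) * (σ / 2 * ‖x‖ ^ 2) + t * (σ / 2 * ‖z‖ ^ 2)
        - σ / 2 * ((1 - t) ^ 2 * ‖x‖ ^ 2 + 2 * ((1 - t) * (t * ⟪x, z⟫)) + t ^ 2 * ‖z‖ ^ 2)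
        = σ / 2 * t * (1 - t) * ‖z - x‖ ^ 2 := by
      rw [hzx, hsymm]; ring
    have h3 : t * ⟪y, z - x⟫ + σ / 2 * t * (1 - t) * ‖z - x‖ ^ 2 ≤ t * (f z - f x) := by
      linarith [hconv, hsub, hid]
    have h4 : t * (⟪y, z - x⟫ + σ / 2 * ‖z - x‖ ^ 2)
        ≤ t * (f z - f x + σ / 2 * ‖z - x‖ ^ 2 * t) := by nlinarith [h3]
    exact le_of_mul_le_mul_left h4 ht
  rcases le_or_gt (σ / 2 * ‖z - x‖ ^ 2) 0 with h0 | h0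
  · have h1 := key 1 one_pos le_rfl
    linarith
  · have : f x + ⟪y, z - x⟫ + σ / 2 * ‖z - x‖ ^ 2 ≤ f z + 0 := by
      refine le_of_forall_pos_le_add ?_
      intro ε hε
      set c := σ / 2 * ‖z - x‖ ^ 2 with hc
      have htpos : 0 < min 1 (ε / c) := lt_min one_pos (div_pos hε h0)
      have hk := key (min 1 (ε / c)) htpos (min_le_left _ _)
      have hle : c * min 1 (ε / c) ≤ ε := by
        calc c * min 1 (ε / c) ≤ c * (ε / c) :=
              mul_le_mul_of_nonneg_left (min_le_right _ _) h0.le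
          _ = ε := by field_simp
      linarith
    linarith

/-- Lemma 3.1: descent of the Lyapunov sequence for the exact refined inertial DCA.
Here `x k` denotes the iterate `x^{k-1}` (so `x 0 = x^{-1}`, `x 1 = x^0`), and
`y k` denotes `y^k ∈ ∂f₂(x^k)`. -/
theorem RInDCAe_descent {n : ℕ}
    (f₁ f₂ : EuclideanSpace ℝ (Fin n) → ℝ) (σ₁ σ₂ γ : ℝ)
    (hσ₁ : 0 ≤ σ₁) (hσ₂ : 0 ≤ σ₂) (hpos : 0 < σ₁ + σ₂)
    (hγ : γ ∈ Set.Ico (0 : ℝ) ((σ₁ + σ₂) / 2))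
    (hf₁ : StrongConvex σ₁ f₁) (hf₂ : StrongConvex σ₂ f₂)
    (x y : ℕ → EuclideanSpace ℝ (Fin n)) (hinit : x 0 = x 1)
    (hy : ∀ k, y k ∈ subdiff f₂ (x (k + 1)))
    (hstep : ∀ k, y k + γ • (x (k + 1) - x k) ∈ subdiff f₁ (x (k + 2))) :
    (∀ k, (f₁ (x (k + 2)) - f₂ (x (k + 2))) + (σ₁ + σ₂ - γ) / 2 * ‖x (k + 2) - x (k + 1)‖ ^ 2
        ≤ (f₁ (x (k + 1)) - f₂ (x (k + 1))) + (σ₁ + σ₂ - γ) / 2 * ‖x (k + 1) - x k‖ ^ 2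
          - (σ₁ + σ₂ - 2 * γ) / 2 * ‖x (k + 1) - x k‖ ^ 2) ∧
    Antitone (fun k =>
      (f₁ (x (k + 1)) - f₂ (x (k + 1))) + (σ₁ + σ₂ - γ) / 2 * ‖x (k + 1) - x k‖ ^ 2) := by
  obtain ⟨hγ0, hγ2⟩ := hγ
  have main : ∀ k, (f₁ (x (k + 2)) - f₂ (x (k + 2))) + (σ₁ + σ₂ - γ) / 2 * ‖x (k + 2) - x (k + 1)‖ ^ 2
        ≤ (f₁ (x (k + 1)) - f₂ (x (k + 1))) + (σ₁ + σ₂ - γ) / 2 * ‖x (k + 1) - x k‖ ^ 2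
          - (σ₁ + σ₂ - 2 * γ) / 2 * ‖x (k + 1) - x k‖ ^ 2 := by
    intro k
    set d := x (k + 1) - x k with hd
    set e := x (k + 2) - x (k + 1) with he
    have h1 := strong_subdiff hf₁ (hstep k) (x (k + 1))
    have h2 := strong_subdiff hf₂ (hy k) (x (k + 2))
    have hrev : x (k + 1) - x (k + 2) = -e := by rw [he]; abel
    rw [hrev] at h1
    rw [inner_neg_right, inner_add_left, real_inner_smul_left, norm_neg] at h1
    have hip : γ * ⟪d, e⟫ ≤ γ / 2 * (‖d‖ ^ 2 + ‖e‖ ^ 2) := by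
      have hcs : ⟪d, e⟫ ≤ ‖d‖ * ‖e‖ := real_inner_le_norm d e
      nlinarith [sq_nonneg (‖d‖ - ‖e‖), hγ0]
    linarith [h1, h2, hip]
  refine ⟨main, antitone_nat_of_succ_le fun k => ?_⟩
  have hm := main k
  have hnn : 0 ≤ (σ₁ + σ₂ - 2 * γ) / 2 * ‖x (k + 1) - x k‖ ^ 2 := by
    have : 0 ≤ σ₁ + σ₂ - 2 * γ := by linarith
    positivity
  linarith [main k, hnn]
end

section
/- Let σ₁ > 0, σ₂ > 0, λ ∈ (0,1) with λσ₂/σ₁ < 1. Then with t = √(λσ₂/σ₁), one has σ̄_t/2 = (σ₁ + σ₂)/2 - √(λσ₁σ₂) > (1-λ)σ₂/2, where σ̄_t = σ₁(1-t) + σ₂ - λσ₂/t. -/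
/-- With t = √(λσ₂/σ₁), the refined bound σ̄_t/2 equals (σ₁+σ₂)/2 - √(λσ₁σ₂) and
is strictly larger than the original InDCA bound (1-λ)σ₂/2. -/
theorem refined_bound_larger (σ₁ σ₂ lam : ℝ)
    (hσ₁ : 0 < σ₁) (hσ₂ : 0 < σ₂) (hlam : lam ∈ Set.Ioo (0 : ℝ) 1)
    (hratio : lam * σ₂ / σ₁ < 1) :
    (σ₁ * (1 - Real.sqrt (lam * σ₂ / σ₁)) + σ₂ - lam * σ₂ / Real.sqrt (lam * σ₂ / σ₁)) / 2
        = (σ₁ + σ₂) / 2 - Real.sqrt (lam * σ₁ * σ₂) ∧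
    (σ₁ + σ₂) / 2 - Real.sqrt (lam * σ₁ * σ₂) > (1 - lam) * σ₂ / 2 := by
  obtain ⟨hl0, hl1⟩ := hlam
  set a := Real.sqrt σ₁ with ha
  set b := Real.sqrt (lam * σ₂) with hb
  have hls : 0 < lam * σ₂ := mul_pos hl0 hσ₂
  have ha0 : 0 < a := Real.sqrt_pos.mpr hσ₁
  have hb0 : 0 < b := Real.sqrt_pos.mpr hls
  have ha2 : a ^ 2 = σ₁ := Real.sq_sqrt hσ₁.le
  have hb2 : b ^ 2 = lam * σ₂ := Real.sq_sqrt hls.le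
  have hdiv : Real.sqrt (lam * σ₂ / σ₁) = b / a := by
    exact Real.sqrt_div hls.le σ₁
  have hmul : Real.sqrt (lam * σ₁ * σ₂) = a * b := by
    rw [show lam * σ₁ * σ₂ = σ₁ * (lam * σ₂) by ring, Real.sqrt_mul hσ₁.le]
  have hne : a ≠ b := by
    intro h
    have : σ₁ = lam * σ₂ := by rw [← ha2, ← hb2, h]
    have : lam * σ₂ / σ₁ = 1 := by field_simp [this]; linarith
    linarith
  constructor
  · rw [hdiv, hmul]
    have hba : b / a ≠ 0 := by positivity
    field_simp
    nlinarith [ha2, hb2]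
  · rw [hmul]
    nlinarith [sq_pos_of_ne_zero (sub_ne_zero.mpr hne), ha2, hb2]
end

section
/- Define H₁(λ) = (σ₁+σ₂)/2 - √(λσ₁σ₂) and H₂(λ) = (1-λ)σ₂/2 for λ ∈ (0,1) with σ₁ ≥ σ₂ > 0. Then H₁(λ) > H₂(λ) for all λ ∈ (0,1), and for fixed λ and σ₂ the gap H₁(λ) - H₂(λ) is strictly increasing in σ₁ on (λσ₂, ∞). -/
lemma sqrt_split (lam σ₂ s : ℝ) (hl : 0 ≤ lam) (h2 : 0 ≤ σ₂) :
    Real.sqrt (lam * s * σ₂) = Real.sqrt (lam * σ₂) * Real.sqrt s := by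
  rw [show lam * s * σ₂ = (lam * σ₂) * s by ring,
    Real.sqrt_mul (mul_nonneg hl h2)]

/-- H₁(λ) > H₂(λ) on (0,1) when σ₁ ≥ σ₂ > 0, and the gap H₁ - H₂ is strictly
increasing in σ₁ on (λσ₂, ∞). -/
theorem H1_gt_H2_and_gap_mono (σ₁ σ₂ lam : ℝ)
    (hσ₂ : 0 < σ₂) (hσ₁ : σ₂ ≤ σ₁) (hlam : lam ∈ Set.Ioo (0 : ℝ) 1) :
    ((σ₁ + σ₂) / 2 - Real.sqrt (lam * σ₁ * σ₂) > (1 - lam) * σ₂ / 2) ∧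
    StrictMonoOn (fun s : ℝ => ((s + σ₂) / 2 - Real.sqrt (lam * s * σ₂)) - (1 - lam) * σ₂ / 2)
      (Set.Ioi (lam * σ₂)) := by
  obtain ⟨hl0, hl1⟩ := hlam
  have hc2 : lam * σ₂ < σ₂ := by nlinarith
  constructor
  · rw [sqrt_split _ _ _ hl0.le hσ₂.le]
    set c := Real.sqrt (lam * σ₂) with hc
    set s1 := Real.sqrt σ₁ with hs1
    have hcsq : c ^ 2 = lam * σ₂ := Real.sq_sqrt (by positivity)
    have hs1sq : s1 ^ 2 = σ₁ := Real.sq_sqrt (by linarith)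
    have hlt : c < s1 := by
      apply Real.sqrt_lt_sqrt (by positivity); linarith
    nlinarith [sq_nonneg (s1 - c)]
  · intro a ha b hb hab
    simp only [Set.mem_Ioi] at ha hb
    have ha0 : 0 < a := lt_trans (by positivity) ha
    have hb0 : 0 < b := lt_trans ha0 hab
    simp only
    rw [sqrt_split _ _ _ hl0.le hσ₂.le, sqrt_split _ _ _ hl0.le hσ₂.le]
    set c := Real.sqrt (lam * σ₂) with hc
    set sa := Real.sqrt a with hsa
    set sb := Real.sqrt b with hsb
    have hcsq : c ^ 2 = lam * σ₂ := Real.sq_sqrt (by positivity)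
    have hasq : sa ^ 2 = a := Real.sq_sqrt ha0.le
    have hbsq : sb ^ 2 = b := Real.sq_sqrt hb0.le
    have hca : c < sa := Real.sqrt_lt_sqrt (by positivity) ha
    have hab' : sa < sb := Real.sqrt_lt_sqrt ha0.le hab
    have hc0 : 0 ≤ c := Real.sqrt_nonneg _
    nlinarith [mul_pos (sub_pos.2 hab') (show (0:ℝ) < sa + sb - 2*c by linarith)]
end

section
/- With E(x,y,z) = f₁(x) - ⟨x,y⟩ + f₂*(y) + ((σ₁-γ)/2)‖x - z‖² and the exact refined inertial DCA sequence, one has for all k ≥ 1: E(xᵏ, yᵏ⁻¹, xᵏ⁻¹) ≥ f(xᵏ) + ((σ₁-γ)/2)‖xᵏ - xᵏ⁻¹‖² ≥ f* + ((σ₁-γ)/2)‖xᵏ - xᵏ⁻¹‖², where f* = inf f > -∞. In particular {E(xᵏ, yᵏ⁻¹, xᵏ⁻¹)} is bounded below and, being nonincreasing, convergent. -/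
open RealInnerProductSpace Filter Topology

noncomputable def conj {n : ℕ} (f : EuclideanSpace ℝ (Fin n) → ℝ)
    (y : EuclideanSpace ℝ (Fin n)) : ℝ :=
  ⨆ z, (⟪y, z⟫ - f z)

noncomputable def Efun {n : ℕ} (f₁ f₂ : EuclideanSpace ℝ (Fin n) → ℝ) (σ₁ γ : ℝ)
    (x y z : EuclideanSpace ℝ (Fin n)) : ℝ :=
  f₁ x - ⟪x, y⟫ + conj f₂ y + (σ₁ - γ) / 2 * ‖x - z‖ ^ 2

lemma strongconv_subdiff {n : ℕ} {σ : ℝ} {f : EuclideanSpace ℝ (Fin n) → ℝ}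
    (hf : StrongConvex σ f) {p s : EuclideanSpace ℝ (Fin n)} (hs : s ∈ subdiff f p)
    (q : EuclideanSpace ℝ (Fin n)) :
    f p + ⟪s, q - p⟫ + σ / 2 * ‖q - p‖ ^ 2 ≤ f q := by
  have key : ∀ t ∈ Set.Ioc (0:ℝ) 1,
      ⟪s, q - p⟫ + σ / 2 * ‖q - p‖ ^ 2 ≤ (f q - f p) + t * (σ / 2 * ‖q - p‖ ^ 2) := by
    intro t ht
    obtain ⟨ht0, ht1⟩ := ht
    have hconv := hf.2 (Set.mem_univ p) (Set.mem_univ q)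
      (by linarith : (0:ℝ) ≤ 1 - t) ht0.le (by ring)
    have hq_t : (1 - t) • p + t • q = p + t • (q - p) := by module
    rw [hq_t] at hconv
    have hsub := hs (p + t • (q - p))
    have e0 : p + t • (q - p) - p = t • (q - p) := by abel
    rw [e0, real_inner_smul_right] at hsub
    have e2 : ‖p + t • (q - p)‖ ^ 2
        = ‖p‖ ^ 2 + 2 * (t * ⟪p, q - p⟫) + t ^ 2 * ‖q - p‖ ^ 2 := by
      rw [norm_add_sq_real, real_inner_smul_right, norm_smul, mul_pow, Real.norm_eq_abs, sq_abs]
    have e3 : ‖q‖ ^ 2 = ‖p‖ ^ 2 + 2 * ⟪p, q - p⟫ + ‖q - p‖ ^ 2 := by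
      have := norm_add_sq_real p (q - p)
      simpa using this
    simp only [e2, e3, smul_eq_mul] at hconv
    have hmul : t * (⟪s, q - p⟫ + σ / 2 * ‖q - p‖ ^ 2)
        ≤ t * ((f q - f p) + t * (σ / 2 * ‖q - p‖ ^ 2)) := by nlinarith [hsub, hconv]
    exact le_of_mul_le_mul_left hmul ht0
  have cont : Tendsto (fun t : ℝ => (f q - f p) + t * (σ / 2 * ‖q - p‖ ^ 2)) (𝓝[>] (0:ℝ))
      (𝓝 ((f q - f p) + 0 * (σ / 2 * ‖q - p‖ ^ 2))) :=
    ((continuous_const.add (continuous_id.mul continuous_const)).tendsto 0).mono_left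
      nhdsWithin_le_nhds
  have hev : ∀ᶠ t in 𝓝[>] (0:ℝ),
      ⟪s, q - p⟫ + σ / 2 * ‖q - p‖ ^ 2 ≤ (f q - f p) + t * (σ / 2 * ‖q - p‖ ^ 2) :=
    Filter.eventually_of_mem (Ioc_mem_nhdsGT_of_mem ⟨le_refl 0, one_pos⟩) key
  have := ge_of_tendsto cont hev
  linarith [this]

lemma conj_of_subdiff {n : ℕ} {f : EuclideanSpace ℝ (Fin n) → ℝ}
    {p s : EuclideanSpace ℝ (Fin n)} (hs : s ∈ subdiff f p) :
    conj f s = ⟪s, p⟫ - f p := by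
  have hub : ∀ z, ⟪s, z⟫ - f z ≤ ⟪s, p⟫ - f p := by
    intro z
    have := hs z
    rw [inner_sub_right] at this
    linarith
  refine le_antisymm (ciSup_le hub) ?_
  exact le_ciSup ⟨⟪s, p⟫ - f p, Set.forall_mem_range.2 hub⟩ p

/-- Proposition 4.1(iii), lower bound part: E(xᵏ,yᵏ⁻¹,xᵏ⁻¹) ≥ f(xᵏ) + ((σ₁-γ)/2)‖xᵏ-xᵏ⁻¹‖²
≥ f* + ((σ₁-γ)/2)‖xᵏ-xᵏ⁻¹‖², and the nonincreasing sequence {E(xᵏ,yᵏ⁻¹,xᵏ⁻¹)} converges.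
Here `x 0 = x^{-1}`, `x (k+1) = x^k`, and `y k = y^k ∈ ∂f₂(x^k)`. -/
theorem Efun_bounded_below_and_converges {n : ℕ}
    (f₁ f₂ : EuclideanSpace ℝ (Fin n) → ℝ) (σ₁ σ₂ γ fstar : ℝ)
    (hσ₁ : 0 ≤ σ₁) (hσ₂ : 0 ≤ σ₂) (hpos : 0 < σ₁ + σ₂)
    (hγ : γ ∈ Set.Ico (0 : ℝ) ((σ₁ + σ₂) / 2))
    (hf₁ : StrongConvex σ₁ f₁) (hf₂ : StrongConvex σ₂ f₂)
    (hfstar : ∀ z, fstar ≤ f₁ z - f₂ z)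
    (x y : ℕ → EuclideanSpace ℝ (Fin n)) (hinit : x 0 = x 1)
    (hy : ∀ k, y k ∈ subdiff f₂ (x (k + 1)))
    (hstep : ∀ k, y k + γ • (x (k + 1) - x k) ∈ subdiff f₁ (x (k + 2))) :
    (∀ k, Efun f₁ f₂ σ₁ γ (x (k + 2)) (y k) (x (k + 1))
        ≥ (f₁ (x (k + 2)) - f₂ (x (k + 2))) + (σ₁ - γ) / 2 * ‖x (k + 2) - x (k + 1)‖ ^ 2) ∧
    (∀ k, Efun f₁ f₂ σ₁ γ (x (k + 2)) (y k) (x (k + 1))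
        ≥ fstar + (σ₁ - γ) / 2 * ‖x (k + 2) - x (k + 1)‖ ^ 2) ∧
    (∃ L : ℝ, Tendsto (fun k => Efun f₁ f₂ σ₁ γ (x (k + 2)) (y k) (x (k + 1)))
        atTop (nhds L)) := by
  obtain ⟨hγ0, hγ2⟩ := hγ
  set E : ℕ → ℝ := fun k => Efun f₁ f₂ σ₁ γ (x (k + 2)) (y k) (x (k + 1)) with hE
  -- exact form of E
  have hEeq : ∀ k, E k = f₁ (x (k + 2)) - ⟪y k, x (k + 2)⟫ + (⟪y k, x (k + 1)⟫ - f₂ (x (k + 1)))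
      + (σ₁ - γ) / 2 * ‖x (k + 2) - x (k + 1)‖ ^ 2 := by
    intro k
    simp only [hE, Efun, conj_of_subdiff (hy k), real_inner_comm (x (k + 2)) (y k)]
  -- claim 1
  have claim1 : ∀ k, E k ≥ (f₁ (x (k + 2)) - f₂ (x (k + 2)))
      + (σ₁ - γ) / 2 * ‖x (k + 2) - x (k + 1)‖ ^ 2 := by
    intro k
    have h := hy k (x (k + 2))
    rw [inner_sub_right] at h
    rw [hEeq k]
    linarith
  -- stronger lower bound via strong convexity of f₂ : E k ≥ fstar
  have hlb : ∀ k, E k ≥ fstar := by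
    intro k
    have h := strongconv_subdiff hf₂ (hy k) (x (k + 2))
    rw [inner_sub_right] at h
    have hcoef : 0 ≤ (σ₁ + σ₂ - γ) / 2 := by linarith
    have hn : (0:ℝ) ≤ ‖x (k + 2) - x (k + 1)‖ ^ 2 := by positivity
    have hf := hfstar (x (k + 2))
    rw [hEeq k]
    nlinarith [mul_nonneg hcoef hn]
  -- claim 2
  have claim2 : ∀ k, E k ≥ fstar + (σ₁ - γ) / 2 * ‖x (k + 2) - x (k + 1)‖ ^ 2 := by
    intro k
    have := claim1 k
    have := hfstar (x (k + 2))
    linarith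
  -- monotonicity
  have hmono : ∀ k, E (k + 1) ≤ E k := by
    intro k
    have hi1 : k + 1 + 1 = k + 2 := rfl
    have hi2 : k + 1 + 2 = k + 3 := rfl
    have h1 := strongconv_subdiff hf₁ (hstep (k + 1)) (x (k + 2))
    have h2 := strongconv_subdiff hf₂ (hy k) (x (k + 2))
    rw [hi1, hi2, inner_add_left, real_inner_smul_left, inner_sub_right] at h1
    rw [inner_sub_right] at h2
    have e1 : ⟪x (k + 2) - x (k + 1), x (k + 2) - x (k + 3)⟫
        = -⟪x (k + 2) - x (k + 1), x (k + 3) - x (k + 2)⟫ := by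
      rw [show x (k + 2) - x (k + 3) = -(x (k + 3) - x (k + 2)) by abel, inner_neg_right]
    rw [e1] at h1
    have e2 : ‖x (k + 2) - x (k + 3)‖ = ‖x (k + 3) - x (k + 2)‖ := norm_sub_rev _ _
    rw [e2] at h1
    have hsq : (0:ℝ) ≤ ‖x (k + 3) - x (k + 2)‖ ^ 2
        - 2 * ⟪x (k + 3) - x (k + 2), x (k + 2) - x (k + 1)⟫ + ‖x (k + 2) - x (k + 1)‖ ^ 2 := by
      have h := norm_sub_sq_real (x (k + 3) - x (k + 2)) (x (k + 2) - x (k + 1))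
      nlinarith [sq_nonneg ‖(x (k + 3) - x (k + 2)) - (x (k + 2) - x (k + 1))‖]
    have hc : ⟪x (k + 3) - x (k + 2), x (k + 2) - x (k + 1)⟫
        = ⟪x (k + 2) - x (k + 1), x (k + 3) - x (k + 2)⟫ := real_inner_comm _ _
    have hn1 : (0:ℝ) ≤ ‖x (k + 2) - x (k + 1)‖ ^ 2 := by positivity
    rw [hEeq k, hEeq (k + 1), hi1, hi2]
    nlinarith [mul_nonneg hγ0 hsq, mul_nonneg (by linarith : (0:ℝ) ≤ σ₁ + σ₂ - 2 * γ) hn1,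
      h1, h2, hc]
  refine ⟨claim1, claim2, ⟨⨅ k, E k, ?_⟩⟩
  exact tendsto_atTop_ciInf (antitone_nat_of_succ_le hmono)
    ⟨fstar, Set.forall_mem_range.2 hlb⟩
end

section
/- Let {aₖ}ₖ≥1 be nonnegative reals and {Δₖ} nonnegative with ∑ₖ Δₖ < ∞, and suppose there is D, C > 0 such that aₖ² ≤ (D/C)Δₖ(aₖ + aₖ₋₁) for all k ≥ N. Then ∑ₖ aₖ < ∞. -/
/-- Abstract summability lemma in the KL convergence proof. -/
theorem KL_summability (a Δ : ℕ → ℝ) (D C : ℝ) (N : ℕ)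
    (ha : ∀ k, 0 ≤ a k) (hΔ : ∀ k, 0 ≤ Δ k) (hsum : Summable Δ)
    (hD : 0 < D) (hC : 0 < C)
    (hrec : ∀ k ≥ N, (a (k + 1)) ^ 2 ≤ D / C * Δ (k + 1) * (a (k + 1) + a k)) :
    Summable a := by
  set c : ℝ := D / C with hc
  have hc0 : 0 < c := div_pos hD hC
  -- linear recursion: a (k+1) ≤ 2 c Δ (k+1) + a k / 2
  have hlin : ∀ k ≥ N, a (k + 1) ≤ 2 * (c * Δ (k + 1)) + a k / 2 := by
    intro k hk
    have h := hrec k hk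
    have hM : 0 ≤ c * Δ (k + 1) := mul_nonneg hc0.le (hΔ _)
    set M : ℝ := c * Δ (k + 1) with hMdef
    have h' : a (k + 1) ^ 2 ≤ M * (a (k + 1) + a k) := by
      rw [hMdef, mul_assoc] at h; rw [hMdef, mul_assoc]; exact h
    nlinarith [ha k, ha (k + 1), sq_nonneg (a (k + 1) - M), sq_nonneg (a (k+1) - a k / 2),
      mul_nonneg hM (ha k), mul_nonneg hM (ha (k+1)), sq_nonneg M]
  -- bound on tail partial sums
  have hT : ∀ n, ∑ i ∈ Finset.range n, Δ (N + 1 + i) ≤ ∑' k, Δ k := by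
    intro n
    have := Summable.sum_le_tsum ((Finset.range n).image (fun i => N + 1 + i))
      (fun k _ => hΔ k) hsum
    refine le_trans (le_of_eq ?_) this
    rw [Finset.sum_image]
    intro x _ y _ h; simp only at h; omega
  set T : ℝ := ∑' k, Δ k with hTdef
  have key : ∀ n, (∑ i ∈ Finset.range n, a (N + 1 + i)) / 2 + a (N + n) / 2
      ≤ 2 * c * (∑ i ∈ Finset.range n, Δ (N + 1 + i)) + a N / 2 := by
    intro n
    induction n with
    | zero => simp
    | succ n ih =>
      rw [Finset.sum_range_succ, Finset.sum_range_succ]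
      have hrec' := hlin (N + n) (Nat.le_add_right _ _)
      have hΔ' : 0 ≤ Δ (N + 1 + n) := hΔ _
      have e1 : N + n + 1 = N + 1 + n := by omega
      rw [e1] at hrec'
      have e2 : N + (n + 1) = N + 1 + n := by omega
      rw [e2]
      linarith
  have hbound : ∀ n, ∑ i ∈ Finset.range n, a (i + (N + 1)) ≤ 2 * (2 * c * T) + a N := by
    intro n
    have := key n
    have h2 : 2 * c * (∑ i ∈ Finset.range n, Δ (N + 1 + i)) ≤ 2 * c * T :=
      mul_le_mul_of_nonneg_left (hT n) (by linarith)
    have e : ∑ i ∈ Finset.range n, a (i + (N + 1)) = ∑ i ∈ Finset.range n, a (N + 1 + i) := by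
      apply Finset.sum_congr rfl; intro i _; congr 1; omega
    rw [e]
    linarith [ha (N + n)]
  have : Summable (fun i => a (i + (N + 1))) :=
    summable_of_sum_range_le (fun i => ha _) hbound
  exact (summable_nat_add_iff (N + 1)).mp this
end
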